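/- Let R be a commutative ring and Q a commutative R-algebra which is the localization of R at its submonoid of non-zero-divisors (IsLocalization (nonZeroDivisors R) Q), i.e. Q is the total ring of quotients of R. Then R is weak skew-Armendariz if and only if Q is weak skew-Armendariz. -/

import Mathlib

/-- A ring `T` is weak skew-Armendariz if for all polynomials `f, g` over `T` of degree
at most 1 with `f * g = 0`, one has `f.coeff 0 * g.coeff j = 0` for all `j`. -/
def WeakSkewArmendariz (T : Type*) [Ring T] : Prop :=
  ∀ f g : Polynomial T, f.degree ≤ 1 → g.degree ≤ 1 → f * g = 0 →
    ∀ j : ℕ, f.coeff 0 * g.coeff j = 0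

/-- For a commutative ring `R` with total ring of quotients `Q`
(the localization at the non-zero-divisors), `R` is weak skew-Armendariz iff `Q` is. -/
theorem weakSkewArmendariz_iff_totalQuotientRing (R Q : Type*) [CommRing R] [CommRing Q]
    [Algebra R Q] [IsLocalization (nonZeroDivisors R) Q] :
    WeakSkewArmendariz R ↔ WeakSkewArmendariz Q := by
  have hinj : Function.Injective (algebraMap R Q) :=
    IsLocalization.injective Q (le_refl (nonZeroDivisors R))
  constructor
  · intro hR f g hf hg hfg j
    obtain ⟨F, s, hs⟩ : ∃ (F : Polynomial R) (s : nonZeroDivisors R),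
        ∀ i, algebraMap R Q (F.coeff i) = (s : R) • f.coeff i := by
      obtain ⟨s, hsM, hs⟩ := IsLocalization.integerNormalization_spec (nonZeroDivisors R) f
      exact ⟨_, ⟨s, hsM⟩, fun i => by rw [← Polynomial.coeff_map, hs, Polynomial.coeff_smul]⟩
    obtain ⟨G, t, ht⟩ : ∃ (G : Polynomial R) (t : nonZeroDivisors R),
        ∀ i, algebraMap R Q (G.coeff i) = (t : R) • g.coeff i := by
      obtain ⟨t, htM, ht⟩ := IsLocalization.integerNormalization_spec (nonZeroDivisors R) g
      exact ⟨_, ⟨t, htM⟩, fun i => by rw [← Polynomial.coeff_map, ht, Polynomial.coeff_smul]⟩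
    have hs' : ∀ i, algebraMap R Q (F.coeff i) = algebraMap R Q s * f.coeff i := by
      intro i; rw [hs i, Algebra.smul_def]
    have ht' : ∀ i, algebraMap R Q (G.coeff i) = algebraMap R Q t * g.coeff i := by
      intro i; rw [ht i, Algebra.smul_def]
    have hFmap : F.map (algebraMap R Q) = Polynomial.C (algebraMap R Q s) * f :=
      Polynomial.ext fun i => by
        rw [Polynomial.coeff_map, Polynomial.coeff_C_mul, hs' i]
    have hGmap : G.map (algebraMap R Q) = Polynomial.C (algebraMap R Q t) * g :=
      Polynomial.ext fun i => by
        rw [Polynomial.coeff_map, Polynomial.coeff_C_mul, ht' i]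
    have hFdeg : F.degree ≤ 1 := by
      rw [Polynomial.degree_le_iff_coeff_zero] at hf ⊢
      intro m hm
      apply hinj
      rw [hs' m, hf m hm, mul_zero, map_zero]
    have hGdeg : G.degree ≤ 1 := by
      rw [Polynomial.degree_le_iff_coeff_zero] at hg ⊢
      intro m hm
      apply hinj
      rw [ht' m, hg m hm, mul_zero, map_zero]
    have hFG : F * G = 0 := by
      apply Polynomial.map_injective _ hinj
      rw [Polynomial.map_mul, hFmap, hGmap, mul_mul_mul_comm, hfg, mul_zero,
        Polynomial.map_zero]
    have h0 := hR F G hFdeg hGdeg hFG j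
    have h1 : algebraMap R Q (F.coeff 0 * G.coeff j) = 0 := by rw [h0, map_zero]
    rw [map_mul, hs' 0, ht' j] at h1
    have hsu := IsLocalization.map_units Q s
    have htu := IsLocalization.map_units Q t
    have h2 : algebraMap R Q s * (algebraMap R Q t * (f.coeff 0 * g.coeff j)) = 0 := by
      rw [← h1]; ring
    rw [hsu.mul_right_eq_zero, htu.mul_right_eq_zero] at h2
    exact h2
  · intro hQ f g hf hg hfg j
    apply hinj
    rw [map_mul, map_zero]
    have := hQ (f.map (algebraMap R Q)) (g.map (algebraMap R Q))
      (Polynomial.degree_map_le.trans hf) (Polynomial.degree_map_le.trans hg)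
      (by rw [← Polynomial.map_mul, hfg, Polynomial.map_zero]) j
    simpa using this
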